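/- arXiv:2512.06402 — 6 statements merged into one kernel-verified Lean document; each statement's English description precedes it below -/
import Mathlib

section
/- Let ω > 0, b ∈ (0,1) and define g(z) = ω·(1 − 1/(b(1−2z)² − 2(z−1)z + 1)) for z ∈ [0,1]. If b > 1/2, then g is strictly increasing on (1/2,1] and strictly decreasing on [0,1/2); hence g is maximized at z ∈ {0,1} and minimized at z = 1/2. If b < 1/2 the converse holds: g is maximized at z = 1/2 and minimized at z ∈ {0,1}. -/
private lemma keylt (ω dx dy : ℝ) (hω : 0 < ω) (hx : 0 < dx) (h : dx < dy) :
    ω * (1 - 1/dx) < ω * (1 - 1/dy) := by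
  have h1 := one_div_lt_one_div_of_lt hx h
  have h2 : (1 - 1/dx) < (1 - 1/dy) := by linarith
  exact mul_lt_mul_of_pos_left h2 hω

private lemma keyle (ω dx dy : ℝ) (hω : 0 < ω) (hx : 0 < dx) (h : dx ≤ dy) :
    ω * (1 - 1/dx) ≤ ω * (1 - 1/dy) := by
  have h1 := one_div_le_one_div_of_le hx h
  have h2 : (1 - 1/dx) ≤ (1 - 1/dy) := by linarith
  exact mul_le_mul_of_nonneg_left h2 hω.le

private lemma Dpos (b z : ℝ) (hb0 : 0 < b) (h0 : 0 ≤ z) (h1 : z ≤ 1) :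
    0 < b * (1 - 2*z)^2 - 2 * (z - 1) * z + 1 := by
  nlinarith [mul_nonneg hb0.le (sq_nonneg (1 - 2*z)),
    mul_nonneg (sub_nonneg.2 h1) h0]

theorem stmt_5 (ω b : ℝ) (hω : 0 < ω) (hb : b ∈ Set.Ioo (0:ℝ) 1) :
    let g : ℝ → ℝ := fun z =>
      ω * (1 - 1 / (b * (1 - 2*z)^2 - 2 * (z - 1) * z + 1))
    (b > 1/2 →
      StrictMonoOn g (Set.Ioc (1/2 : ℝ) 1) ∧
      StrictAntiOn g (Set.Ico (0:ℝ) (1/2)) ∧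
      (∀ z ∈ Set.Icc (0:ℝ) 1, g z ≤ g 0 ∧ g z ≤ g 1) ∧
      (∀ z ∈ Set.Icc (0:ℝ) 1, g (1/2) ≤ g z)) ∧
    (b < 1/2 →
      StrictAntiOn g (Set.Ioc (1/2 : ℝ) 1) ∧
      StrictMonoOn g (Set.Ico (0:ℝ) (1/2)) ∧
      (∀ z ∈ Set.Icc (0:ℝ) 1, g z ≤ g (1/2)) ∧
      (∀ z ∈ Set.Icc (0:ℝ) 1, g 0 ≤ g z ∧ g 1 ≤ g z)) := by
  obtain ⟨hb0, hb1⟩ := hb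
  intro g
  constructor
  · intro hbg
    refine ⟨?_, ?_, ?_, ?_⟩
    · intro x hx y hy hxy
      exact keylt ω _ _ hω (Dpos b x hb0 (by linarith [hx.1]) hx.2)
        (by nlinarith [mul_pos (mul_pos (show (0:ℝ) < 4*b-2 by linarith)
          (sub_pos.2 hxy)) (show (0:ℝ) < x + y - 1 by linarith [hx.1, hy.1])])
    · intro x hx y hy hxy
      exact keylt ω _ _ hω (Dpos b y hb0 (by linarith [hy.1]) (by linarith [hy.2]))
        (by nlinarith [mul_pos (mul_pos (show (0:ℝ) < 4*b-2 by linarith)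
          (sub_pos.2 hxy)) (show (0:ℝ) < 1 - x - y by linarith [hx.2, hy.2])])
    · intro z hz
      have hp := Dpos b z hb0 hz.1 hz.2
      have hkey : (0:ℝ) ≤ (4*b-2) * (z * (1 - z)) :=
        mul_nonneg (by linarith) (mul_nonneg hz.1 (by linarith [hz.2]))
      exact ⟨keyle ω _ _ hω hp (by nlinarith), keyle ω _ _ hω hp (by nlinarith)⟩
    · intro z hz
      exact keyle ω _ _ hω (Dpos b (1/2) hb0 (by norm_num) (by norm_num))
        (by nlinarith [mul_nonneg (show (0:ℝ) ≤ 4*b-2 by linarith) (sq_nonneg (z - 1/2))])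
  · intro hbl
    refine ⟨?_, ?_, ?_, ?_⟩
    · intro x hx y hy hxy
      exact keylt ω _ _ hω (Dpos b y hb0 (by linarith [hy.1]) hy.2)
        (by nlinarith [mul_pos (mul_pos (show (0:ℝ) < 2-4*b by linarith)
          (sub_pos.2 hxy)) (show (0:ℝ) < x + y - 1 by linarith [hx.1, hy.1])])
    · intro x hx y hy hxy
      exact keylt ω _ _ hω (Dpos b x hb0 hx.1 (by linarith [hx.2]))
        (by nlinarith [mul_pos (mul_pos (show (0:ℝ) < 2-4*b by linarith)
          (sub_pos.2 hxy)) (show (0:ℝ) < 1 - x - y by linarith [hx.2, hy.2])])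
    · intro z hz
      exact keyle ω _ _ hω (Dpos b z hb0 hz.1 hz.2)
        (by nlinarith [mul_nonneg (show (0:ℝ) ≤ 2-4*b by linarith) (sq_nonneg (z - 1/2))])
    · intro z hz
      have hp := Dpos b (0:ℝ) hb0 le_rfl zero_le_one
      have hp1 := Dpos b (1:ℝ) hb0 zero_le_one le_rfl
      have hkey : (0:ℝ) ≤ (2-4*b) * (z * (1 - z)) :=
        mul_nonneg (by linarith) (mul_nonneg hz.1 (by linarith [hz.2]))
      exact ⟨keyle ω _ _ hω hp (by nlinarith), keyle ω _ _ hω hp1 (by nlinarith)⟩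
end

section
/- Let γ, μ > 0, σ > 1, λ > 0, b ∈ (0,1), φ ∈ (0,1), and define Ω(φ) = γ((b−1)(λ+2)φ² + 2b(λ+1)φ + (b−1)λ)/(2σφ) − ln φ/(σ−1). If b > b_s(φ) := ((λ+2)φ² + λ)/((φ+1)((λ+2)φ + λ)), then Ω(φ) > 0. -/
theorem stmt_7 (γ μ σ lam b φ : ℝ) (hγ : 0 < γ) (hμ : 0 < μ) (hσ : 1 < σ)
    (hlam : 0 < lam) (hb : b ∈ Set.Ioo (0:ℝ) 1) (hφ : φ ∈ Set.Ioo (0:ℝ) 1)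
    (hbs : b > ((lam + 2) * φ^2 + lam) / ((φ + 1) * ((lam + 2) * φ + lam))) :
    γ * ((b - 1) * (lam + 2) * φ^2 + 2 * b * (lam + 1) * φ + (b - 1) * lam)
        / (2 * σ * φ) - Real.log φ / (σ - 1) > 0 := by
  obtain ⟨hφ0, hφ1⟩ := hφ
  have hD : 0 < (φ + 1) * ((lam + 2) * φ + lam) := by positivity
  have hN : 0 < (b - 1) * (lam + 2) * φ^2 + 2 * b * (lam + 1) * φ + (b - 1) * lam := by
    have := (div_lt_iff₀ hD).mp hbs
    nlinarith [this]
  have h1 : 0 < γ * ((b - 1) * (lam + 2) * φ^2 + 2 * b * (lam + 1) * φ + (b - 1) * lam)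
      / (2 * σ * φ) := by
    apply div_pos (mul_pos hγ hN)
    have : 0 < σ := lt_trans one_pos hσ
    positivity
  have h2 : Real.log φ < 0 := Real.log_neg hφ0 hφ1
  have h3 : Real.log φ / (σ - 1) < 0 := div_neg_of_neg_of_pos h2 (by linarith)
  linarith
end

section
/- Let φ ∈ (0,1) and z ∈ (1/2, 1]. Define b̲(z,φ) = ((z−1)z(φ²−1) + φ²) / (2(z−1)z(φ²−1) + φ(φ+1)). Then 0 < b̲(z,φ) < (φ²+1)/(φ+1)². -/
theorem stmt_13 (φ z : ℝ) (hφ : φ ∈ Set.Ioo (0:ℝ) 1) (hz : z ∈ Set.Ioc (1/2 : ℝ) 1) :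
    0 < ((z - 1) * z * (φ^2 - 1) + φ^2) /
        (2 * (z - 1) * z * (φ^2 - 1) + φ * (φ + 1)) ∧
    ((z - 1) * z * (φ^2 - 1) + φ^2) /
        (2 * (z - 1) * z * (φ^2 - 1) + φ * (φ + 1)) < (φ^2 + 1) / (φ + 1)^2 := by
  obtain ⟨hφ1, hφ2⟩ := hφ
  obtain ⟨hz1, hz2⟩ := hz
  have ht : (z - 1) * z ≤ 0 := mul_nonpos_of_nonpos_of_nonneg (by linarith) (by linarith)
  have hφsq : φ^2 - 1 < 0 := by nlinarith
  have hN : 0 < (z - 1) * z * (φ^2 - 1) + φ^2 := by nlinarith [mul_nonneg (neg_nonneg.2 ht) (le_of_lt (neg_pos.2 hφsq))]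
  have hD : 0 < 2 * (z - 1) * z * (φ^2 - 1) + φ * (φ + 1) := by
    nlinarith [mul_nonneg (neg_nonneg.2 ht) (le_of_lt (neg_pos.2 hφsq))]
  refine ⟨div_pos hN hD, ?_⟩
  rw [div_lt_div_iff₀ hD (by positivity)]
  have hA : (0:ℝ) < φ + 1 := by linarith
  have hB : (0:ℝ) < 1 - φ := by linarith
  nlinarith [mul_pos (mul_pos hA hB) hφ1,
    mul_nonneg (mul_nonneg hA.le hB.le) (mul_nonneg (neg_nonneg.2 ht) (sq_nonneg (1 - φ)))]
end

section
/- Let φ ∈ (0,1), z ∈ (1/2, 1). Define N(z,φ) = (2z−1)(φ²−1)[2z²(φ−1)² − 2z(φ−1)² + φ² + 1] − 4[z(φ−1)+1]²[z(1−φ)+φ]²·ln((z(φ−1)+1)/(z(1−φ)+φ)). Then N(1/2, φ) = 0 and ∂N/∂z < 0 for z ∈ (1/2,1); hence N(z,φ) < 0 for all z ∈ (1/2,1). -/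
lemma stmt_15_key (φ z : ℝ) (ha : 0 < z * (φ - 1) + 1) (hb : 0 < z * (1 - φ) + φ) :
    HasDerivAt (fun z : ℝ =>
      (2*z - 1) * (φ^2 - 1) * (2*z^2 * (φ - 1)^2 - 2*z * (φ - 1)^2 + φ^2 + 1)
      - 4 * (z * (φ - 1) + 1)^2 * (z * (1 - φ) + φ)^2 *
          Real.log ((z * (φ - 1) + 1) / (z * (1 - φ) + φ)))
      (-4*(1-φ)^3*(1+φ)*(2*z-1)^2
        + 8*(1-φ)^2*(2*z-1)*((z*(φ-1)+1)*(z*(1-φ)+φ)) *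
          Real.log ((z * (φ - 1) + 1) / (z * (1 - φ) + φ))) z := by
  have hA : HasDerivAt (fun z : ℝ => z * (φ - 1) + 1) (φ - 1) z := by
    simpa using ((hasDerivAt_id z).mul_const (φ - 1)).add_const 1
  have hB : HasDerivAt (fun z : ℝ => z * (1 - φ) + φ) (1 - φ) z := by
    simpa using ((hasDerivAt_id z).mul_const (1 - φ)).add_const φ
  have h1 : HasDerivAt (fun z : ℝ => 2*z - 1) 2 z := by
    simpa using ((hasDerivAt_id z).const_mul 2).sub_const 1
  have h2 : HasDerivAt (fun z : ℝ => 2*z^2 * (φ - 1)^2 - 2*z * (φ - 1)^2 + φ^2 + 1)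
      (2*(2*z)*(φ-1)^2 - 2*(φ-1)^2) z := by
    have hz2 : HasDerivAt (fun z : ℝ => z^2) (2*z) z := by
      simpa using hasDerivAt_pow 2 z
    have := (((hz2.const_mul 2).mul_const ((φ-1)^2)).sub
      (((hasDerivAt_id z).const_mul 2).mul_const ((φ-1)^2))).add_const (φ^2+1)
    convert this using 2
    case e'_4 => rfl
    case e'_5 => rfl
    case e'_9 => ring
    case e'_8 => simp only [Pi.sub_apply, id_eq]; ring
  have hP := (h1.mul_const (φ^2 - 1)).mul h2
  have hA2 := hA.pow 2
  have hB2 := hB.pow 2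
  have hQ := hA.div hB hb.ne'
  have hL := hQ.log (div_ne_zero ha.ne' hb.ne')
  have hbig := (((hA2.const_mul 4).mul hB2).mul hL)
  have h := hP.sub hbig
  convert h using 1
  case e'_4 => rfl
  case e'_5 => rfl
  case e'_8 => funext x; simp only [Pi.sub_apply, Pi.mul_apply, Pi.pow_apply, Pi.div_apply]
  simp only [Pi.mul_apply, Pi.pow_apply, Pi.div_apply, Nat.cast_ofNat]
  have hAB : (z * (φ - 1) + 1) / (z * (1 - φ) + φ) ≠ 0 := div_ne_zero ha.ne' hb.ne'
  field_simp
  ring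

theorem stmt_15 (φ : ℝ) (hφ : φ ∈ Set.Ioo (0:ℝ) 1) :
    let N : ℝ → ℝ := fun z =>
      (2*z - 1) * (φ^2 - 1) * (2*z^2 * (φ - 1)^2 - 2*z * (φ - 1)^2 + φ^2 + 1)
      - 4 * (z * (φ - 1) + 1)^2 * (z * (1 - φ) + φ)^2 *
          Real.log ((z * (φ - 1) + 1) / (z * (1 - φ) + φ))
    N (1/2) = 0 ∧
    (∀ z ∈ Set.Ioo (1/2 : ℝ) 1, deriv N z < 0) ∧
    (∀ z ∈ Set.Ioo (1/2 : ℝ) 1, N z < 0) := by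
  obtain ⟨hφ0, hφ1⟩ := hφ
  intro N
  -- positivity of a, b on [1/2, 1)
  have hab : ∀ z ∈ Set.Ico (1/2 : ℝ) 1, 0 < z * (φ - 1) + 1 ∧ 0 < z * (1 - φ) + φ := by
    intro z ⟨hz1, hz2⟩
    constructor
    · nlinarith
    · nlinarith
  have hN0 : N (1/2) = 0 := by
    simp only [N]
    have hd : (1/2:ℝ) * (1 - φ) + φ ≠ 0 := by nlinarith [hφ0, hφ1]
    rw [show ((1/2:ℝ) * (φ - 1) + 1) = ((1/2:ℝ) * (1 - φ) + φ) by ring, div_self hd,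
      Real.log_one]
    ring
  have hderiv : ∀ z ∈ Set.Ioo (1/2 : ℝ) 1, deriv N z < 0 := by
    intro z hz
    obtain ⟨ha, hb⟩ := hab z ⟨hz.1.le, hz.2⟩
    rw [(stmt_15_key φ z ha hb).deriv]
    have h2z : 0 < 2*z - 1 := by linarith [hz.1]
    have hlog : Real.log ((z * (φ - 1) + 1) / (z * (1 - φ) + φ)) < 0 := by
      apply Real.log_neg
      · positivity
      · rw [div_lt_one hb]
        nlinarith [hz.1]
    have hφ' : (0:ℝ) < 1 - φ := by linarith
    have h1 : -4*(1-φ)^3*(1+φ)*(2*z-1)^2 < 0 := by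
      have hpos : (0:ℝ) < 4*(1-φ)^3*(1+φ)*(2*z-1)^2 := by positivity
      linarith
    have h2 : 8*(1-φ)^2*(2*z-1)*((z*(φ-1)+1)*(z*(1-φ)+φ)) *
        Real.log ((z * (φ - 1) + 1) / (z * (1 - φ) + φ)) < 0 := by
      apply mul_neg_of_pos_of_neg _ hlog
      have h8 : (0:ℝ) < 8*(1-φ)^2 := mul_pos (by norm_num) (pow_pos hφ' 2)
      exact mul_pos (mul_pos h8 h2z) (mul_pos ha hb)
    linarith
  refine ⟨hN0, hderiv, ?_⟩
  intro z hz
  have hanti : StrictAntiOn N (Set.Ico (1/2 : ℝ) 1) := by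
    apply strictAntiOn_of_deriv_neg (convex_Ico _ _)
    · intro x hx
      obtain ⟨ha, hb⟩ := hab x hx
      exact (stmt_15_key φ x ha hb).differentiableAt.continuousAt.continuousWithinAt
    · rw [interior_Ico]
      exact hderiv
  have := hanti (Set.mem_Ico.mpr ⟨le_refl _, by norm_num⟩)
    (Set.mem_Ico.mpr ⟨hz.1.le, hz.2⟩) hz.1
  rwa [hN0] at this
end

section
/- Let σ > 1 and λ > σ/(σ−1). Define φ_b^g = (2(λ+1)(σ−1) − √(4σ² + 4(σ−1)² + 8σ(σ−1))) / ((2λ+4)(σ−1) + 2σ). Then φ_b^g ∈ (0,1). (Note the square root simplifies: 4σ² + 4(σ−1)² + 8σ(σ−1) = 4(2σ−1)², so φ_b^g = ((λ+1)(σ−1) − (2σ−1))/((λ+2)(σ−1) + σ).) -/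
theorem stmt_17 (σ lam : ℝ) (hσ : 1 < σ) (hlam : lam > σ / (σ - 1)) :
    let φbg : ℝ :=
      (2 * (lam + 1) * (σ - 1) -
        Real.sqrt (4 * σ^2 + 4 * (σ - 1)^2 + 8 * σ * (σ - 1)))
      / ((2*lam + 4) * (σ - 1) + 2 * σ)
    φbg ∈ Set.Ioo (0:ℝ) 1 ∧
    φbg = ((lam + 1) * (σ - 1) - (2 * σ - 1)) / ((lam + 2) * (σ - 1) + σ) := by
  intro φbg
  have hs1 : (0:ℝ) < σ - 1 := by linarith
  have hsqrt : Real.sqrt (4 * σ^2 + 4 * (σ - 1)^2 + 8 * σ * (σ - 1)) = 4*σ - 2 := by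
    have : 4 * σ^2 + 4 * (σ - 1)^2 + 8 * σ * (σ - 1) = (4*σ - 2)^2 := by ring
    rw [this, Real.sqrt_sq (by linarith)]
  have hlam' : lam * (σ - 1) > σ := by
    have := (div_lt_iff₀ hs1).mp hlam
    linarith
  have hden : (0:ℝ) < (2*lam + 4) * (σ - 1) + 2 * σ := by nlinarith
  have hnum : (0:ℝ) < 2 * (lam + 1) * (σ - 1) - (4*σ - 2) := by nlinarith
  have heq : φbg = ((lam + 1) * (σ - 1) - (2 * σ - 1)) / ((lam + 2) * (σ - 1) + σ) := by
    show _ = _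
    rw [show φbg = (2 * (lam + 1) * (σ - 1) -
        Real.sqrt (4 * σ^2 + 4 * (σ - 1)^2 + 8 * σ * (σ - 1)))
      / ((2*lam + 4) * (σ - 1) + 2 * σ) from rfl, hsqrt]
    rw [div_eq_div_iff hden.ne' (by nlinarith : ((lam + 2) * (σ - 1) + σ : ℝ) ≠ 0)]
    ring
  refine ⟨⟨?_, ?_⟩, heq⟩
  · show (0:ℝ) < _
    rw [show φbg = (2 * (lam + 1) * (σ - 1) -
        Real.sqrt (4 * σ^2 + 4 * (σ - 1)^2 + 8 * σ * (σ - 1)))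
      / ((2*lam + 4) * (σ - 1) + 2 * σ) from rfl, hsqrt]
    positivity
  · show _ < (1:ℝ)
    rw [show φbg = (2 * (lam + 1) * (σ - 1) -
        Real.sqrt (4 * σ^2 + 4 * (σ - 1)^2 + 8 * σ * (σ - 1)))
      / ((2*lam + 4) * (σ - 1) + 2 * σ) from rfl, hsqrt]
    rw [div_lt_one hden]
    nlinarith
end

section
/- Let γ, μ > 0, σ > 1, λ > 0, φ ∈ (0,1), z ∈ (1/2, 1). Then the derivative of the indirect utility differential with respect to b, ∂Δv/∂b = γμ(2z−1)(φ+1)(λ − 4z² + φ(λ + 4(z−1)z + 2) + 4z) / (2σ(z(φ−1)+1)(z(1−φ)+φ)), is strictly positive. -/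
theorem stmt_19 (γ μ σ lam φ z : ℝ) (hγ : 0 < γ) (hμ : 0 < μ) (hσ : 1 < σ)
    (hlam : 0 < lam) (hφ : φ ∈ Set.Ioo (0:ℝ) 1) (hz : z ∈ Set.Ioo (1/2 : ℝ) 1) :
    γ * μ * (2*z - 1) * (φ + 1) *
        (lam - 4*z^2 + φ * (lam + 4 * (z - 1) * z + 2) + 4*z)
      / (2 * σ * (z * (φ - 1) + 1) * (z * (1 - φ) + φ)) > 0 := by
  obtain ⟨hφ0, hφ1⟩ := hφ
  obtain ⟨hz0, hz1⟩ := hz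
  apply div_pos
  · have h1 : 0 < 2*z - 1 := by linarith
    have h2 : 0 < lam - 4*z^2 + φ * (lam + 4 * (z - 1) * z + 2) + 4*z := by
      nlinarith [sq_nonneg (2*z - 1), mul_pos hφ0 hlam]
    positivity
  · have h1 : 0 < z * (φ - 1) + 1 := by nlinarith
    have h2 : 0 < z * (1 - φ) + φ := by nlinarith
    positivity
end
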